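/- For all t ∈ (0, 1/2], it holds that 2t + t·log₂(t) + (1-t)·log₂(1-t) ≤ 0. -/
import Mathlib

theorem stmt_2 (t : ℝ) (ht : t ∈ Set.Ioc 0 (1 / 2 : ℝ)) :
    2 * t + t * Real.logb 2 t + (1 - t) * Real.logb 2 (1 - t) ≤ 0 := by
  obtain ⟨ht0, ht1⟩ := ht
  have hlog2 : (0:ℝ) < Real.log 2 := Real.log_pos (by norm_num)
  -- concavity gives binEntropy t ≥ 2t * log 2
  have hconc := Real.strictConcave_binEntropy.concaveOn.2
    (show (0:ℝ) ∈ Set.Icc (0:ℝ) 1 by norm_num)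
    (show (2⁻¹:ℝ) ∈ Set.Icc (0:ℝ) 1 by norm_num)
        (show (0:ℝ) ≤ 1 - 2*t by linarith) (show (0:ℝ) ≤ 2*t by linarith) (by ring)
  simp only [Real.binEntropy_zero, Real.binEntropy_two_inv, smul_eq_mul, mul_zero,
    zero_add] at hconc
  have hxt : (1 - 2*t) * 0 + 2*t * 2⁻¹ = t := by ring
  rw [show (2*t*2⁻¹ : ℝ) = t by ring] at hconc
  -- rewrite binEntropy
  have hbe : Real.binEntropy t = -(t * Real.log t) - (1 - t) * Real.log (1 - t) := by
    rw [Real.binEntropy, Real.log_inv, Real.log_inv]; ring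
  rw [hbe] at hconc
  have h1 : 2 * t * Real.log 2 + t * Real.log t + (1 - t) * Real.log (1 - t) ≤ 0 := by
    linarith
  have e1 : Real.logb 2 t = Real.log t / Real.log 2 := rfl
  have e2 : Real.logb 2 (1 - t) = Real.log (1 - t) / Real.log 2 := rfl
  rw [e1, e2]
  rw [div_eq_mul_inv, div_eq_mul_inv]
  have := mul_le_mul_of_nonneg_right h1 (inv_nonneg.2 hlog2.le)
  have hinv : Real.log 2 * (Real.log 2)⁻¹ = 1 := mul_inv_cancel₀ hlog2.ne'
  nlinarith [this, hinv]
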